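/- Let m be a positive half-integer (m ∈ ℤ + 1/2, m > 0) and let λ be any partition. All entries of the m-tableau T_m(λ) lie in ℤ_{≥0} + 1/2, and writing M_l for the number of boxes of T_m(λ) with entry l, the following hold: (i) M_p − M_{p+1} ∈ {0, 1, 2} for every p ∈ ℤ + 1/2 with p ≥ m; (ii) M_p − M_{p+1} ∈ {−1, 0, 1} for every p ∈ ℤ + 1/2 with 1/2 ≤ p ≤ m − 1. -/

import Mathlib

open scoped Classical

/-- The multiplicity `M_l` of the entry `l` in the `m`-tableau `T_m(λ)`:
the number of boxes `(i,j)` (here 0-indexed, so the box in row `i+1` and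
column `j+1` of the Young diagram of `lam`, i.e. `j < lam i`) whose entry
`|i - j + m|` equals `l`. -/
noncomputable def Mmult (lam : ℕ → ℕ) (m : ℝ) (l : ℝ) : ℕ :=
  Set.ncard {p : ℕ × ℕ | p.2 < lam p.1 ∧ |(p.1 : ℝ) - (p.2 : ℝ) + m| = l}

namespace Stmt1Aux

/-- The set of (row indices of) boxes on the diagonal `j = i + c`. -/
def Sdiag (lam : ℕ → ℕ) (c : ℤ) : Set ℕ := {i | 0 ≤ (i:ℤ) + c ∧ (i:ℤ) + c < lam i}

lemma sdiag_finite (lam : ℕ → ℕ) (hfin : ∃ N, ∀ i, N ≤ i → lam i = 0) (c : ℤ) :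
    (Sdiag lam c).Finite := by
  obtain ⟨N, hN⟩ := hfin
  apply Set.Finite.subset (Set.finite_Iio N)
  intro i hi
  obtain ⟨h1, h2⟩ := hi
  simp only [Set.mem_Iio]
  by_contra h
  push_neg at h
  have h0 := hN i h
  omega

lemma ncard_succ_le (lam : ℕ → ℕ) (hfin : ∃ N, ∀ i, N ≤ i → lam i = 0)
    (c : ℤ) (hc : 0 ≤ c) :
    (Sdiag lam (c+1)).ncard ≤ (Sdiag lam c).ncard := by
  apply Set.ncard_le_ncard _ (sdiag_finite lam hfin c)
  rintro i ⟨h1, h2⟩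
  exact ⟨by omega, by omega⟩

lemma ncard_le_succ (lam : ℕ → ℕ) (hanti : Antitone lam)
    (hfin : ∃ N, ∀ i, N ≤ i → lam i = 0) (c : ℤ) (hc : 0 ≤ c) :
    (Sdiag lam c).ncard ≤ (Sdiag lam (c+1)).ncard + 1 := by
  have hss : (Sdiag lam c \ Sdiag lam (c+1)).Subsingleton := by
    intro i hi i' hi'
    by_contra hne
    have key : ∀ j, j ∈ Sdiag lam c \ Sdiag lam (c+1) → (lam j : ℤ) = j + c + 1 := by
      rintro j ⟨⟨hj1, hj2⟩, hj3⟩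
      simp only [Sdiag, Set.mem_setOf_eq, not_and, not_lt] at hj3
      omega
    have k1 := key i hi
    have k2 := key i' hi'
    rcases Nat.lt_or_ge i i' with h | h
    · have := hanti (le_of_lt h); omega
    · have h' : i' < i := by omega
      have := hanti (le_of_lt h'); omega
  have hsub : Sdiag lam c ⊆ Sdiag lam (c+1) ∪ (Sdiag lam c \ Sdiag lam (c+1)) := by
    intro i hi
    by_cases h : i ∈ Sdiag lam (c+1)
    exacts [Or.inl h, Or.inr ⟨hi, h⟩]
  have hf1 := sdiag_finite lam hfin (c+1)
  have hf2 : (Sdiag lam c \ Sdiag lam (c+1)).Finite := (sdiag_finite lam hfin c).diff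
  calc (Sdiag lam c).ncard
      ≤ (Sdiag lam (c+1) ∪ (Sdiag lam c \ Sdiag lam (c+1))).ncard :=
        Set.ncard_le_ncard hsub (hf1.union hf2)
    _ ≤ (Sdiag lam (c+1)).ncard + (Sdiag lam c \ Sdiag lam (c+1)).ncard :=
        Set.ncard_union_le _ _
    _ ≤ (Sdiag lam (c+1)).ncard + 1 := by
        have := (Set.ncard_le_one_iff_eq (hs := hf2)).mpr ?_
        · omega
        · rcases hss.eq_empty_or_singleton with h | ⟨x, h⟩
          exacts [Or.inl h, Or.inr ⟨x, h⟩]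

lemma ncard_pred_le (lam : ℕ → ℕ) (hanti : Antitone lam)
    (hfin : ∃ N, ∀ i, N ≤ i → lam i = 0) (c : ℤ) (hc : c ≤ 0) :
    (Sdiag lam (c-1)).ncard ≤ (Sdiag lam c).ncard := by
  have h1 : (Sdiag lam (c-1)).ncard = ((fun i => i - 1) '' Sdiag lam (c-1)).ncard := by
    rw [Set.ncard_image_of_injOn]
    rintro i ⟨hi1, _⟩ i' ⟨hi1', _⟩ h
    dsimp only at h
    omega
  rw [h1]
  apply Set.ncard_le_ncard _ (sdiag_finite lam hfin c)
  rintro _ ⟨i, ⟨hi1, hi2⟩, rfl⟩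
  have hm := hanti (Nat.sub_le i 1)
  refine ⟨?_, ?_⟩ <;> · dsimp only; omega

lemma ncard_le_pred (lam : ℕ → ℕ) (hanti : Antitone lam)
    (hfin : ∃ N, ∀ i, N ≤ i → lam i = 0) (c : ℤ) (hc : c ≤ 0) :
    (Sdiag lam c).ncard ≤ (Sdiag lam (c-1)).ncard + 1 := by
  set T : Set ℕ := {i | i ∈ Sdiag lam c ∧ i + 1 ∈ Sdiag lam (c-1)} with hT
  have hTsub : T ⊆ Sdiag lam c := fun i hi => hi.1
  have hTfin := (sdiag_finite lam hfin c).subset hTsub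
  have key : ∀ j, j ∈ Sdiag lam c \ T → (lam (j+1) : ℤ) ≤ j + c := by
    rintro j ⟨hj, hj2⟩
    simp only [hT, Set.mem_setOf_eq, not_and] at hj2
    have hj3 := hj2 hj
    simp only [Sdiag, Set.mem_setOf_eq, not_and, not_lt] at hj3
    obtain ⟨hj4, hj5⟩ := hj
    have := hj3 (by push_cast; omega)
    omega
  have hss : (Sdiag lam c \ T).Subsingleton := by
    intro i hi i' hi'
    by_contra hne
    have k1 := key i hi
    have k2 := key i' hi'
    obtain ⟨⟨hi1, hi2⟩, _⟩ := hi
    obtain ⟨⟨hi1', hi2'⟩, _⟩ := hi'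
    rcases Nat.lt_or_ge i i' with h | h
    · have := hanti (show i + 1 ≤ i' by omega); omega
    · have h' : i' < i := by omega
      have := hanti (show i' + 1 ≤ i by omega); omega
  have hsub : Sdiag lam c ⊆ T ∪ (Sdiag lam c \ T) := by
    intro i hi
    by_cases h : i ∈ T
    exacts [Or.inl h, Or.inr ⟨hi, h⟩]
  have hf2 : (Sdiag lam c \ T).Finite := (sdiag_finite lam hfin c).diff
  have hTle : T.ncard ≤ (Sdiag lam (c-1)).ncard := by
    have himg : (fun i => i + 1) '' T ⊆ Sdiag lam (c-1) := by
      rintro _ ⟨i, hi, rfl⟩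
      exact hi.2
    have : T.ncard = ((fun i => i + 1) '' T).ncard :=
      (Set.ncard_image_of_injective _ (fun a b h => by omega)).symm
    rw [this]
    exact Set.ncard_le_ncard himg (sdiag_finite lam hfin (c-1))
  calc (Sdiag lam c).ncard
      ≤ (T ∪ (Sdiag lam c \ T)).ncard := Set.ncard_le_ncard hsub (hTfin.union hf2)
    _ ≤ T.ncard + (Sdiag lam c \ T).ncard := Set.ncard_union_le _ _
    _ ≤ (Sdiag lam (c-1)).ncard + 1 := by
        have h1 : (Sdiag lam c \ T).ncard ≤ 1 := by
          have := (Set.ncard_le_one_iff_eq (hs := hf2)).mpr ?_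
          · omega
          · rcases hss.eq_empty_or_singleton with h | ⟨x, h⟩
            exacts [Or.inl h, Or.inr ⟨x, h⟩]
        omega

lemma mult_eq (lam : ℕ → ℕ) (hfin : ∃ N, ∀ i, N ≤ i → lam i = 0) (k a : ℕ) :
    Mmult lam ((k:ℝ)+1/2) ((a:ℝ)+1/2)
      = (Sdiag lam ((k:ℤ) - (a:ℕ))).ncard + (Sdiag lam ((k:ℤ) + (a:ℕ) + 1)).ncard := by
  have habs : ∀ i j : ℕ, (|(i:ℝ) - (j:ℝ) + ((k:ℝ)+1/2)| = (a:ℝ)+1/2) ↔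
      ((j:ℤ) = (i:ℤ) + ((k:ℤ) - (a:ℕ)) ∨ (j:ℤ) = (i:ℤ) + ((k:ℤ) + (a:ℕ) + 1)) := by
    intro i j
    rw [abs_eq (by positivity)]
    constructor
    · rintro (h | h)
      · left
        have : (j:ℝ) = (i:ℝ) + ((k:ℝ) - (a:ℕ)) := by linarith
        exact_mod_cast this
      · right
        have : (j:ℝ) = (i:ℝ) + ((k:ℝ) + (a:ℕ) + 1) := by linarith
        exact_mod_cast this
    · rintro (h | h)
      · left
        have : (j:ℝ) = (i:ℝ) + ((k:ℝ) - (a:ℕ)) := by exact_mod_cast h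
        linarith
      · right
        have : (j:ℝ) = (i:ℝ) + ((k:ℝ) + (a:ℕ) + 1) := by exact_mod_cast h
        linarith
  have hset : {p : ℕ × ℕ | p.2 < lam p.1 ∧ |(p.1:ℝ) - (p.2:ℝ) + ((k:ℝ)+1/2)| = (a:ℝ)+1/2}
      = (fun i : ℕ => (i, ((i:ℤ) + ((k:ℤ) - (a:ℕ))).toNat)) '' Sdiag lam ((k:ℤ) - (a:ℕ))
        ∪ (fun i : ℕ => (i, i + (k + a + 1))) '' Sdiag lam ((k:ℤ) + (a:ℕ) + 1) := by
    ext ⟨i, j⟩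
    simp only [Set.mem_setOf_eq, Set.mem_union, Set.mem_image, habs, Sdiag, Prod.mk.injEq]
    constructor
    · rintro ⟨hlt, h | h⟩
      · exact Or.inl ⟨i, ⟨by omega, by omega⟩, rfl, by omega⟩
      · exact Or.inr ⟨i, ⟨by omega, by omega⟩, rfl, by omega⟩
    · rintro (⟨i', ⟨h1, h2⟩, rfl, rfl⟩ | ⟨i', ⟨h1, h2⟩, rfl, rfl⟩)
      · exact ⟨by omega, Or.inl (by omega)⟩
      · exact ⟨by omega, Or.inr (by omega)⟩
  have hinj1 : Function.Injective (fun i : ℕ => (i, ((i:ℤ) + ((k:ℤ) - (a:ℕ))).toNat)) := by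
    intro x y h
    simpa using congrArg Prod.fst h
  have hinj2 : Function.Injective (fun i : ℕ => (i, i + (k + a + 1))) := by
    intro x y h
    simpa using congrArg Prod.fst h
  have hdisj : Disjoint
      ((fun i : ℕ => (i, ((i:ℤ) + ((k:ℤ) - (a:ℕ))).toNat)) '' Sdiag lam ((k:ℤ) - (a:ℕ)))
      ((fun i : ℕ => (i, i + (k + a + 1))) '' Sdiag lam ((k:ℤ) + (a:ℕ) + 1)) := by
    rw [Set.disjoint_left]
    rintro p ⟨x, hx, rfl⟩ ⟨y, hy, hxy⟩
    simp only [Prod.mk.injEq] at hxy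
    obtain ⟨rfl, h2⟩ := hxy
    obtain ⟨hx1, _⟩ := hx
    omega
  simp only [Mmult]
  rw [hset, Set.ncard_union_eq hdisj ((sdiag_finite lam hfin _).image _)
      ((sdiag_finite lam hfin _).image _),
    Set.ncard_image_of_injective _ hinj1, Set.ncard_image_of_injective _ hinj2]

end Stmt1Aux

/-- for a positive half-integer `m = k + 1/2` and any partition
`lam`, all entries of `T_m(λ)` lie in `ℤ_{≥0} + 1/2`, and the multiplicities
`M_l` satisfy: (i) `M_p - M_{p+1} ∈ {0,1,2}` for `p ∈ ℤ + 1/2`, `p ≥ m`;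
(ii) `M_p - M_{p+1} ∈ {-1,0,1}` for `p ∈ ℤ + 1/2` with `1/2 ≤ p ≤ m - 1`. -/
theorem stmt1 (k : ℕ) (m : ℝ) (hm : m = (k : ℝ) + 1/2)
    (lam : ℕ → ℕ) (hanti : Antitone lam) (hfin : ∃ N, ∀ i, N ≤ i → lam i = 0) :
    (∀ i j : ℕ, j < lam i → ∃ a : ℕ, |(i : ℝ) - (j : ℝ) + m| = (a : ℝ) + 1/2) ∧
    (∀ p : ℝ, (∃ a : ℤ, p = (a : ℝ) + 1/2) → m ≤ p →
      Mmult lam m (p + 1) ≤ Mmult lam m p ∧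
      Mmult lam m p ≤ Mmult lam m (p + 1) + 2) ∧
    (∀ p : ℝ, (∃ a : ℤ, p = (a : ℝ) + 1/2) → 1/2 ≤ p → p ≤ m - 1 →
      Mmult lam m p ≤ Mmult lam m (p + 1) + 1 ∧
      Mmult lam m (p + 1) ≤ Mmult lam m p + 1) := by
  subst hm
  refine ⟨?_, ?_, ?_⟩
  · -- entries are in ℤ≥0 + 1/2
    intro i j _
    have hcast : (i:ℝ) - (j:ℝ) + ((k:ℝ)+1/2) = (((i:ℤ) - (j:ℤ) + (k:ℤ) : ℤ):ℝ) + 1/2 := by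
      push_cast; ring
    set t : ℤ := (i:ℤ) - (j:ℤ) + (k:ℤ) with ht
    rcases le_or_gt 0 t with h | h
    · refine ⟨t.toNat, ?_⟩
      have h1 : ((t.toNat : ℕ):ℝ) = (t:ℝ) := by exact_mod_cast Int.toNat_of_nonneg h
      have h2 : (0:ℝ) ≤ (t:ℝ) := by exact_mod_cast h
      rw [hcast, abs_of_nonneg (by linarith), h1]
    · refine ⟨(-t-1).toNat, ?_⟩
      have h1 : (((-t-1).toNat : ℕ):ℝ) = ((-t-1 : ℤ):ℝ) := by
        exact_mod_cast Int.toNat_of_nonneg (by omega)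
      have h2 : (t:ℝ) ≤ -1 := by exact_mod_cast (by omega : t ≤ -1)
      rw [hcast, abs_of_nonpos (by linarith), h1]
      push_cast
      ring
  · -- case p ≥ m
    rintro p ⟨b, rfl⟩ hpm
    have hb : (k:ℤ) ≤ b := by
      have : (k:ℝ) ≤ (b:ℝ) := by linarith
      exact_mod_cast this
    obtain ⟨a, rfl⟩ : ∃ a : ℕ, b = (a:ℤ) := ⟨b.toNat, (Int.toNat_of_nonneg (by omega)).symm⟩
    have hka : k ≤ a := by exact_mod_cast hb
    have e1 : ((a:ℤ):ℝ) + 1/2 = ((a:ℕ):ℝ) + 1/2 := by push_cast; ring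
    have e2 : ((a:ℤ):ℝ) + 1/2 + 1 = (((a+1):ℕ):ℝ) + 1/2 := by push_cast; ring
    rw [e2, e1, Stmt1Aux.mult_eq lam hfin k a, Stmt1Aux.mult_eq lam hfin k (a+1)]
    have i1 : ((k:ℤ) - ((a+1:ℕ):ℤ)) = ((k:ℤ) - (a:ℕ)) - 1 := by push_cast; ring
    have i2 : ((k:ℤ) + ((a+1:ℕ):ℤ) + 1) = ((k:ℤ) + (a:ℕ) + 1) + 1 := by push_cast; ring
    rw [i1, i2]
    have hc1 : ((k:ℤ) - (a:ℕ)) ≤ 0 := by omega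
    have hc2 : (0:ℤ) ≤ (k:ℤ) + (a:ℕ) + 1 := by omega
    have A1 := Stmt1Aux.ncard_pred_le lam hanti hfin ((k:ℤ) - (a:ℕ)) hc1
    have A2 := Stmt1Aux.ncard_le_pred lam hanti hfin ((k:ℤ) - (a:ℕ)) hc1
    have B1 := Stmt1Aux.ncard_succ_le lam hfin ((k:ℤ) + (a:ℕ) + 1) hc2
    have B2 := Stmt1Aux.ncard_le_succ lam hanti hfin ((k:ℤ) + (a:ℕ) + 1) hc2
    constructor
    · exact Nat.add_le_add A1 B1
    · calc (Stmt1Aux.Sdiag lam ((k:ℤ) - (a:ℕ))).ncard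
            + (Stmt1Aux.Sdiag lam ((k:ℤ) + (a:ℕ) + 1)).ncard
          ≤ ((Stmt1Aux.Sdiag lam (((k:ℤ) - (a:ℕ)) - 1)).ncard + 1)
            + ((Stmt1Aux.Sdiag lam (((k:ℤ) + (a:ℕ) + 1) + 1)).ncard + 1) :=
            Nat.add_le_add A2 B2
        _ = (Stmt1Aux.Sdiag lam (((k:ℤ) - (a:ℕ)) - 1)).ncard
            + (Stmt1Aux.Sdiag lam (((k:ℤ) + (a:ℕ) + 1) + 1)).ncard + 2 := by ring
  · -- case 1/2 ≤ p ≤ m - 1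
    rintro p ⟨b, rfl⟩ hp1 hp2
    have hb0 : (0:ℤ) ≤ b := by
      have : (0:ℝ) ≤ (b:ℝ) := by linarith
      exact_mod_cast this
    have hbk : b + 1 ≤ (k:ℤ) := by
      have : (b:ℝ) + 1 ≤ (k:ℝ) := by linarith
      exact_mod_cast this
    obtain ⟨a, rfl⟩ : ∃ a : ℕ, b = (a:ℤ) := ⟨b.toNat, (Int.toNat_of_nonneg hb0).symm⟩
    have hak : a + 1 ≤ k := by exact_mod_cast hbk
    have e1 : ((a:ℤ):ℝ) + 1/2 = ((a:ℕ):ℝ) + 1/2 := by push_cast; ring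
    have e2 : ((a:ℤ):ℝ) + 1/2 + 1 = (((a+1):ℕ):ℝ) + 1/2 := by push_cast; ring
    rw [e2, e1, Stmt1Aux.mult_eq lam hfin k a, Stmt1Aux.mult_eq lam hfin k (a+1)]
    have i1 : ((k:ℤ) - ((a+1:ℕ):ℤ)) = ((k:ℤ) - (a:ℕ)) - 1 := by push_cast; ring
    have i2 : ((k:ℤ) + ((a+1:ℕ):ℤ) + 1) = ((k:ℤ) + (a:ℕ) + 1) + 1 := by push_cast; ring
    rw [i1, i2]
    have hc1 : (0:ℤ) ≤ ((k:ℤ) - (a:ℕ)) - 1 := by omega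
    have hc2 : (0:ℤ) ≤ (k:ℤ) + (a:ℕ) + 1 := by omega
    have i3 : (((k:ℤ) - (a:ℕ)) - 1) + 1 = (k:ℤ) - (a:ℕ) := by ring
    have A1 := Stmt1Aux.ncard_succ_le lam hfin (((k:ℤ) - (a:ℕ)) - 1) hc1
    have A2 := Stmt1Aux.ncard_le_succ lam hanti hfin (((k:ℤ) - (a:ℕ)) - 1) hc1
    rw [i3] at A1 A2
    have B1 := Stmt1Aux.ncard_succ_le lam hfin ((k:ℤ) + (a:ℕ) + 1) hc2
    have B2 := Stmt1Aux.ncard_le_succ lam hanti hfin ((k:ℤ) + (a:ℕ) + 1) hc2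
    constructor
    · calc (Stmt1Aux.Sdiag lam ((k:ℤ) - (a:ℕ))).ncard
            + (Stmt1Aux.Sdiag lam ((k:ℤ) + (a:ℕ) + 1)).ncard
          ≤ (Stmt1Aux.Sdiag lam (((k:ℤ) - (a:ℕ)) - 1)).ncard
            + ((Stmt1Aux.Sdiag lam (((k:ℤ) + (a:ℕ) + 1) + 1)).ncard + 1) :=
            Nat.add_le_add A1 B2
        _ = (Stmt1Aux.Sdiag lam (((k:ℤ) - (a:ℕ)) - 1)).ncard
            + (Stmt1Aux.Sdiag lam (((k:ℤ) + (a:ℕ) + 1) + 1)).ncard + 1 := by ring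
    · calc (Stmt1Aux.Sdiag lam (((k:ℤ) - (a:ℕ)) - 1)).ncard
            + (Stmt1Aux.Sdiag lam (((k:ℤ) + (a:ℕ) + 1) + 1)).ncard
          ≤ ((Stmt1Aux.Sdiag lam ((k:ℤ) - (a:ℕ))).ncard + 1)
            + (Stmt1Aux.Sdiag lam ((k:ℤ) + (a:ℕ) + 1)).ncard :=
            Nat.add_le_add A2 B1
        _ = (Stmt1Aux.Sdiag lam ((k:ℤ) - (a:ℕ))).ncard
            + (Stmt1Aux.Sdiag lam ((k:ℤ) + (a:ℕ) + 1)).ncard + 1 := by ring
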